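/- Fix n ≥ 1, K > 0, Λ ≤ 0, and let f = f_{K,Λ} with f'(r)/sqrt(1 - f'(r)²) = Λr/n + K r^{1-n}. Then f satisfies the ODE (n-1) f'(r)/(r sqrt(1 - f'(r)²)) + f''(r)/(1 - f'(r)²)^{3/2} = Λ on its domain 0 < r < (nK/|Λ|)^{1/n}. -/

import Mathlib

/-- The barrier profile function `f_{K,Λ}`. -/
noncomputable def barrierProfile (n : ℕ) (K Λ : ℝ) (r : ℝ) : ℝ :=
  ∫ t in (0:ℝ)..r,
    (K + Λ * t ^ n / n) / Real.sqrt (t ^ (2 * n - 2) + (K + Λ * t ^ n / n) ^ 2)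

private lemma barrier_aux (m : ℕ) {K Λ : ℝ} (hK : 0 < K) {s : ℝ} (hs : 0 < s) :
    HasDerivAt (barrierProfile (m+1) K Λ)
      ((K + Λ * s ^ (m+1) / ((m+1 : ℕ) : ℝ)) /
        Real.sqrt (s ^ (2*m) + (K + Λ * s ^ (m+1) / ((m+1 : ℕ) : ℝ)) ^ 2)) s := by
  set g : ℝ → ℝ := fun t => K + Λ * t ^ (m+1) / ((m+1 : ℕ) : ℝ) with hg
  set φ : ℝ → ℝ := fun t => g t / Real.sqrt (t ^ (2*m) + g t ^ 2) with hφ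
  have h2 : 2 * (m+1) - 2 = 2 * m := by omega
  have hB : barrierProfile (m+1) K Λ = fun x => ∫ t in (0:ℝ)..x, φ t := by
    funext x
    simp only [barrierProfile, h2, hφ, hg]
  have hpos : ∀ t : ℝ, 0 ≤ t → 0 < t ^ (2*m) + g t ^ 2 := by
    intro t ht
    rcases ht.eq_or_lt with h | h
    · subst h; simp only [hg, zero_pow (Nat.succ_ne_zero m), mul_zero, zero_div, add_zero]
      positivity
    · positivity
  have hUopen : IsOpen {t : ℝ | 0 < t ^ (2*m) + g t ^ 2} := by
    apply isOpen_lt continuous_const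
    fun_prop
  have hcont : ∀ t : ℝ, 0 < t ^ (2*m) + g t ^ 2 → ContinuousAt φ t := by
    intro t ht
    apply ContinuousAt.div (by fun_prop)
    · exact (Real.continuous_sqrt.continuousAt).comp (by fun_prop)
    · exact Real.sqrt_ne_zero'.mpr ht
  have hco : ContinuousOn φ (Set.uIcc 0 s) := by
    intro t htm
    rw [Set.uIcc_of_le hs.le] at htm
    exact (hcont t (hpos t htm.1)).continuousWithinAt
  rw [hB]
  exact intervalIntegral.integral_hasDerivAt_right hco.intervalIntegrable
    (ContinuousAt.stronglyMeasurableAtFilter hUopen (fun x hx => hcont x hx) s (hpos s hs.le))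
    (hcont s (hpos s hs.le))

/-- The barrier profile `f = f_{K,Λ}` satisfies
`f'/√(1-f'²) = Λr/n + K r^{1-n}` and the constant mean curvature ODE
`(n-1) f'/(r √(1-f'²)) + f''/(1-f'²)^{3/2} = Λ` on its domain. -/
theorem barrierProfile_CMC_ODE
    {n : ℕ} (hn : 1 ≤ n) {K Λ r : ℝ} (hK : 0 < K) (hΛ : Λ ≤ 0)
    (hr : 0 < r) (hdom : Λ < 0 → r < (n * K / |Λ|) ^ ((1:ℝ) / n)) :
    deriv (barrierProfile n K Λ) r /
        Real.sqrt (1 - (deriv (barrierProfile n K Λ) r) ^ 2)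
      = Λ * r / n + K / r ^ (n - 1) ∧
    (n - 1 : ℝ) * deriv (barrierProfile n K Λ) r /
        (r * Real.sqrt (1 - (deriv (barrierProfile n K Λ) r) ^ 2))
      + deriv (deriv (barrierProfile n K Λ)) r /
        (1 - (deriv (barrierProfile n K Λ) r) ^ 2) ^ ((3:ℝ) / 2) = Λ := by
  obtain ⟨m, rfl⟩ : ∃ m, n = m + 1 := ⟨n - 1, by omega⟩
  clear hn hdom hΛ
  set g : ℝ → ℝ := fun t => K + Λ * t ^ (m+1) / ((m+1 : ℕ) : ℝ) with hg
  set φ : ℝ → ℝ := fun t => g t / Real.sqrt (t ^ (2*m) + g t ^ 2) with hφ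
  have key : ∀ s : ℝ, 0 < s → HasDerivAt (barrierProfile (m+1) K Λ) (φ s) s :=
    fun s hs => barrier_aux m hK hs
  have hd1 : deriv (barrierProfile (m+1) K Λ) r = φ r := (key r hr).deriv
  have hd2 : deriv (deriv (barrierProfile (m+1) K Λ)) r = deriv φ r := by
    apply Filter.EventuallyEq.deriv_eq
    filter_upwards [Ioi_mem_nhds hr] with s hs
    exact (key s hs).deriv
  -- abbreviations
  have hm1 : ((m:ℝ) + 1) ≠ 0 := by positivity
  set G := g r with hG
  set a := r ^ m with ha
  have hapos : 0 < a := pow_pos hr m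
  have hhpos : 0 < r ^ (2*m) + G ^ 2 := by positivity
  set S := Real.sqrt (r ^ (2*m) + G ^ 2) with hS
  have hSpos : 0 < S := Real.sqrt_pos.mpr hhpos
  have ha2 : r ^ (2*m) = a ^ 2 := by rw [ha, ← pow_mul, mul_comm]
  have hS2 : S ^ 2 = a ^ 2 + G ^ 2 := by
    rw [hS, Real.sq_sqrt hhpos.le, ha2]
  -- derivative of g
  have hg' : HasDerivAt g (Λ * r ^ m) r := by
    have : HasDerivAt g (Λ * (((m:ℝ)+1) * r ^ m) / ((m:ℝ)+1)) r := by
      simpa [hg] using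
        ((((hasDerivAt_pow (m+1) r).const_mul Λ).div_const (((m+1 : ℕ) : ℝ))).const_add K)
    convert this using 1
    field_simp
  -- derivative of h
  set D : ℝ := ((2*m : ℕ) : ℝ) * r ^ (2*m-1) + 2 * G * (Λ * r ^ m) with hD
  have hh' : HasDerivAt (fun t => t ^ (2*m) + g t ^ 2) D r := by
    have h1 := hasDerivAt_pow (2*m) r
    have h2 := hg'.pow 2
    exact (h1.add h2).congr_deriv (by simp [hD, hG])
  have hsq : HasDerivAt (fun t => Real.sqrt (t ^ (2*m) + g t ^ 2)) (D / (2*S)) r :=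
    hh'.sqrt hhpos.ne'
  have hφ' : HasDerivAt φ ((Λ * r ^ m * S - G * (D / (2*S))) / S ^ 2) r := by
    exact hg'.div hsq hSpos.ne'
  have hφr : φ r = G / S := rfl
  have hDr : ((2*m : ℕ) : ℝ) * r ^ (2*m-1) * r = 2 * m * a ^ 2 := by
    rcases Nat.eq_zero_or_pos m with hm | hm
    · subst hm; simp
    · rw [mul_assoc, ← pow_succ, show 2*m-1+1 = 2*m from by omega, ha2]
      push_cast; ring
  -- sqrt simplification
  have h1msq : 1 - (G / S) ^ 2 = (a / S) ^ 2 := by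
    field_simp
    linear_combination hS2
  have hsqrt1 : Real.sqrt (1 - (G / S) ^ 2) = a / S := by
    rw [h1msq, Real.sqrt_sq (by positivity)]
  have hrpow : (1 - (G / S) ^ 2) ^ ((3:ℝ)/2) = (a / S) ^ 3 := by
    rw [h1msq, ← Real.rpow_natCast (a/S) 2, ← Real.rpow_mul (by positivity),
      ← Real.rpow_natCast (a/S) 3]
    norm_num
  rw [hd1, hd2, hφ'.deriv, hφr, hsqrt1, hrpow]
  constructor
  · rw [hG, hg]
    simp only [Nat.add_sub_cancel, Nat.cast_add, Nat.cast_one]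
    have hxy : (K + Λ * r ^ (m+1) / ((m:ℝ) + 1)) / S / (a / S)
        = (K + Λ * r ^ (m+1) / ((m:ℝ) + 1)) / a := by
      field_simp
    rw [hxy, ha, pow_succ]
    field_simp
    ring
  · push_cast
    have hrm : r ^ m = a := ha.symm
    have hDr2 : D * r = 2*(m:ℝ)*a^2 + 2*G*(Λ*a)*r := by
      rw [hD, add_mul, hDr, hrm]
    clear_value D S G a
    field_simp

    linear_combination (2*r*S^2*Λ) * hrm - G * hDr2 + (2*a*r*Λ) * hS2
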